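/- For n odd, the dimension of DP_n = conv{M_σ : σ ∈ D_n} ⊆ ℝ^{n×n} is 2n − 2. -/

import Mathlib

open Matrix Finset

variable (n : ℕ) [NeZero n]

/-- Permutation matrix of `σ`: entries `δ_{i, σ(j)}`. -/
def permMat (σ : Equiv.Perm (ZMod n)) : Matrix (ZMod n) (ZMod n) ℝ :=
  Matrix.of fun i j => if i = σ j then 1 else 0

/-- Rotation `x ↦ x + 1` of the regular n-gon with vertex set `ZMod n`. -/
def rot : Equiv.Perm (ZMod n) := Equiv.addRight 1

/-- Reflection `x ↦ -x` of the regular n-gon. -/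
def rfl' : Equiv.Perm (ZMod n) := Equiv.neg (ZMod n)

/-- The dihedral group `D_n ≤ S_n`, symmetries of the regular n-gon. -/
def dihedral : Subgroup (Equiv.Perm (ZMod n)) := Subgroup.closure {rot n, rfl' n}

/-- Adjacency matrix of the n-cycle `C_n`. -/
def cycAdj : Matrix (ZMod n) (ZMod n) ℝ :=
  Matrix.of fun i j => if j = i + 1 ∨ j = i - 1 then 1 else 0

/-- The permutation polytope `DP_n = conv{M_σ : σ ∈ D_n} ⊆ ℝ^{n×n}`. -/
def DP : Set (Matrix (ZMod n) (ZMod n) ℝ) :=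
  convexHull ℝ {M | ∃ σ ∈ dihedral n, M = permMat n σ}

/-- The cyclic shift matrix `R`. -/
def Rmat : Matrix (ZMod n) (ZMod n) ℝ := Matrix.of fun i j => if j = i + 1 then 1 else 0

/-- The `2n` rows of `W = [[I,...,I],[I,R,...,R^{n-1}]]`, viewed as vectors in
`ℝ^{n²} = Matrix (ZMod n) (ZMod n) ℝ`; the first matrix coordinate is the block index. -/
def Wrow : Bool × ZMod n → Matrix (ZMod n) (ZMod n) ℝ
  | (false, k) => Matrix.of fun _ j => if j = k then 1 else 0
  | (true, k) => Matrix.of fun b j => (Rmat n ^ b.val) k j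

/-- The polytope `Q_n ⊆ ℝ^{n²}`. -/
def Qpoly : Set (Matrix (ZMod n) (ZMod n) ℝ) := convexHull ℝ (Set.range (Wrow n))

/-- A point of `ℝ^{n²}` is a lattice point if all its coordinates are integers. -/
def IsInt (x : Matrix (ZMod n) (ZMod n) ℝ) : Prop := ∀ b j, ∃ z : ℤ, x b j = (z : ℝ)

namespace DPAux

variable (n : ℕ) [NeZero n]

/-- Rotation matrix with offset `k`. -/
def eM (k : ZMod n) : Matrix (ZMod n) (ZMod n) ℝ :=
  Matrix.of fun i j => if j = i + k then 1 else 0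

/-- Reflection matrix with parameter `k`. -/
def fM (k : ZMod n) : Matrix (ZMod n) (ZMod n) ℝ :=
  Matrix.of fun i j => if i + j = k then 1 else 0

lemma rot_pow (m : ℕ) : (rot n) ^ m = Equiv.addRight (m : ZMod n) := by
  induction m with
  | zero => ext x; simp
  | succ m ih =>
    ext x
    rw [pow_succ, Equiv.Perm.mul_apply, ih]
    simp only [Equiv.coe_addRight, rot]
    push_cast
    ring

lemma addRight_mem (k : ZMod n) : Equiv.addRight k ∈ dihedral n := by
  have h : (rot n) ^ k.val = Equiv.addRight k := by
    rw [rot_pow]; congr 1; simp [ZMod.natCast_val, ZMod.cast_id]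
  rw [← h]
  exact pow_mem (Subgroup.subset_closure (by simp)) _

lemma refl_mem (k : ZMod n) : Equiv.addRight k * rfl' n ∈ dihedral n :=
  mul_mem (addRight_mem n k) (Subgroup.subset_closure (by simp))

lemma mem_dihedral_iff (σ : Equiv.Perm (ZMod n)) :
    σ ∈ dihedral n ↔ (∃ k : ZMod n, ∀ x, σ x = x + k) ∨ (∃ k : ZMod n, ∀ x, σ x = k - x) := by
  constructor
  · intro hσ
    induction hσ using Subgroup.closure_induction with
    | mem x hx =>
      rcases hx with h | h
      · subst h; exact Or.inl ⟨1, fun x => rfl⟩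
      · subst h; exact Or.inr ⟨0, fun x => by simp [rfl']⟩
    | one => exact Or.inl ⟨0, fun x => by simp⟩
    | mul x y hx hy ihx ihy =>
      rcases ihx with ⟨a, ha⟩ | ⟨a, ha⟩ <;> rcases ihy with ⟨b, hb⟩ | ⟨b, hb⟩
      · exact Or.inl ⟨b + a, fun z => by simp [Equiv.Perm.mul_apply, ha, hb]; ring⟩
      · exact Or.inr ⟨b + a, fun z => by simp [Equiv.Perm.mul_apply, ha, hb]; ring⟩
      · exact Or.inr ⟨a - b, fun z => by simp [Equiv.Perm.mul_apply, ha, hb]; ring⟩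
      · exact Or.inl ⟨a - b, fun z => by simp [Equiv.Perm.mul_apply, ha, hb]; ring⟩
    | inv x hx ihx =>
      rcases ihx with ⟨a, ha⟩ | ⟨a, ha⟩
      · refine Or.inl ⟨-a, fun z => ?_⟩
        have : x (z + -a) = z := by rw [ha]; ring
        calc x⁻¹ z = x⁻¹ (x (z + -a)) := by rw [this]
        _ = z + -a := by simp
      · refine Or.inr ⟨a, fun z => ?_⟩
        have : x (a - z) = z := by rw [ha]; ring
        calc x⁻¹ z = x⁻¹ (x (a - z)) := by rw [this]
        _ = a - z := by simp
  · rintro (⟨k, hk⟩ | ⟨k, hk⟩)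
    · have : σ = Equiv.addRight k := Equiv.ext fun x => by simp [hk]
      rw [this]; exact addRight_mem n k
    · have : σ = Equiv.addRight k * rfl' n := Equiv.ext fun x => by
        simp [hk, Equiv.Perm.mul_apply, rfl']; ring
      rw [this]; exact refl_mem n k

/-- The vertex set of `DP n` as a range. -/
lemma vertexSet_eq :
    {M | ∃ σ ∈ dihedral n, M = permMat n σ} = Set.range (Sum.elim (eM n) (fM n)) := by
  ext M
  constructor
  · rintro ⟨σ, hσ, rfl⟩
    rw [mem_dihedral_iff] at hσ
    rcases hσ with ⟨k, hk⟩ | ⟨k, hk⟩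
    · refine ⟨Sum.inl (-k), ?_⟩
      ext i j
      simp only [Sum.elim_inl, eM, permMat, Matrix.of_apply, hk]
      exact if_congr ⟨fun h => by subst h; ring, fun h => by subst h; ring⟩ rfl rfl
    · refine ⟨Sum.inr k, ?_⟩
      ext i j
      simp only [Sum.elim_inr, fM, permMat, Matrix.of_apply, hk]
      exact if_congr eq_sub_iff_add_eq.symm rfl rfl
  · rintro ⟨(k | k), rfl⟩
    · refine ⟨Equiv.addRight (-k), (mem_dihedral_iff n _).mpr (Or.inl ⟨-k, fun x => rfl⟩), ?_⟩
      ext i j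
      simp only [Sum.elim_inl, eM, permMat, Matrix.of_apply, Equiv.coe_addRight]
      exact if_congr ⟨fun h => by subst h; ring, fun h => by subst h; ring⟩ rfl rfl
    · refine ⟨Equiv.addRight k * rfl' n,
        (mem_dihedral_iff n _).mpr (Or.inr ⟨k, fun x => by simp [Equiv.Perm.mul_apply, rfl']; ring⟩), ?_⟩
      ext i j
      simp only [Sum.elim_inr, fM, permMat, Matrix.of_apply, Equiv.Perm.mul_apply, rfl',
        Equiv.neg_apply, Equiv.coe_addRight]
      exact if_congr ⟨fun h => by rw [← h]; ring, fun h => by subst h; ring⟩ rfl rfl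

lemma combo_apply (a b : ZMod n → ℝ) (i j : ZMod n) :
    (∑ k, a k • eM n k + ∑ k, b k • fM n k) i j = a (j - i) + b (i + j) := by
  have h1 : (∑ k, a k • eM n k) i j = a (j - i) := by
    rw [Matrix.sum_apply]
    have : ∀ k : ZMod n, (a k • eM n k) i j = if k = j - i then a k else 0 := by
      intro k
      simp only [Matrix.smul_apply, eM, Matrix.of_apply, smul_eq_mul, mul_ite, mul_one, mul_zero]
      by_cases h : k = j - i
      · subst h; rw [if_pos (by ring), if_pos rfl]
      · rw [if_neg (fun h' => h (by rw [h']; ring)), if_neg h]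
    simp_rw [this]
    exact Finset.sum_ite_eq' _ _ _ |>.trans (by simp)
  have h2 : (∑ k, b k • fM n k) i j = b (i + j) := by
    rw [Matrix.sum_apply]
    have : ∀ k : ZMod n, (b k • fM n k) i j = if k = i + j then b k else 0 := by
      intro k
      simp only [Matrix.smul_apply, fM, Matrix.of_apply, smul_eq_mul, mul_ite, mul_one, mul_zero]
      by_cases h : k = i + j
      · subst h; simp
      · rw [if_neg (fun h' => h h'.symm), if_neg h]
    simp_rw [this]
    exact Finset.sum_ite_eq' _ _ _ |>.trans (by simp)
  rw [Matrix.add_apply, h1, h2]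

/-- Key relation lemma: for odd `n`, any linear relation forces `a k = -b m` for all `k, m`. -/
lemma key (ho : Odd n) (a b : ZMod n → ℝ)
    (h : ∑ k, a k • eM n k + ∑ k, b k • fM n k = 0) : ∀ k m, a k = -b m := by
  obtain ⟨m0, hm0⟩ := ho
  have h2 : (2 : ZMod n) * ((m0 + 1 : ℕ) : ZMod n) = 1 := by
    have hc : ((2 * (m0 + 1) : ℕ) : ZMod n) = ((n + 1 : ℕ) : ZMod n) := by
      congr 1; omega
    push_cast at hc ⊢
    rw [ZMod.natCast_self] at hc
    linear_combination hc
  set t : ZMod n := ((m0 + 1 : ℕ) : ZMod n) with ht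
  intro k m
  have he := congrArg (fun M : Matrix (ZMod n) (ZMod n) ℝ => M (t * (m - k)) (t * (m + k))) h
  simp only [combo_apply, Matrix.zero_apply] at he
  have hji : t * (m + k) - t * (m - k) = k := by linear_combination k * h2
  have hij : t * (m - k) + t * (m + k) = m := by linear_combination m * h2
  rw [hji, hij] at he
  linarith

lemma sum_eM_apply (i j : ZMod n) : (∑ k, eM n k) i j = 1 := by
  have := combo_apply n (fun _ => (1 : ℝ)) (fun _ => 0) i j
  simpa using this

lemma sum_fM_apply (i j : ZMod n) : (∑ k, fM n k) i j = 1 := by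
  have := combo_apply n (fun _ => (0 : ℝ)) (fun _ => 1) i j
  simpa using this

/-- Index type for a basis of the span of differences. -/
abbrev Idx := {k : ZMod n // k ≠ 0} ⊕ {k : ZMod n // k ≠ 0}

/-- The putative basis of the vector span. -/
def B : Idx n → Matrix (ZMod n) (ZMod n) ℝ
  | Sum.inl k => eM n k.1 - eM n 0
  | Sum.inr k => fM n k.1 - fM n 0

lemma card_idx (hn : 3 ≤ n) : Fintype.card (Idx n) = 2 * n - 2 := by
  have h1 : Fintype.card {k : ZMod n // k ≠ 0} = n - 1 := by
    have := Fintype.card_subtype_compl (fun k : ZMod n => k = 0)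
    rw [Fintype.card_subtype_eq (0 : ZMod n), ZMod.card] at this
    exact this
  simp only [Idx, Fintype.card_sum, h1]
  omega

lemma sum_subtype_ne (g : ZMod n → Matrix (ZMod n) (ZMod n) ℝ) :
    ∑ k, g k = g 0 + ∑ k : {k : ZMod n // k ≠ 0}, g k.1 := by
  rw [Fintype.sum_eq_add_sum_compl (0 : ZMod n) g]
  congr 1
  exact Finset.sum_subtype ({(0 : ZMod n)}ᶜ : Finset (ZMod n)) (fun x => by simp) g

lemma linindep_B (hn : 3 ≤ n) (ho : Odd n) : LinearIndependent ℝ (B n) := by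
  rw [Fintype.linearIndependent_iff]
  intro g hg
  classical
  set a : ZMod n → ℝ := fun k =>
    if h : k = 0 then -(∑ m : {k : ZMod n // k ≠ 0}, g (Sum.inl m)) else g (Sum.inl ⟨k, h⟩) with ha
  set b : ZMod n → ℝ := fun k =>
    if h : k = 0 then -(∑ m : {k : ZMod n // k ≠ 0}, g (Sum.inr m)) else g (Sum.inr ⟨k, h⟩) with hb
  have hsum : ∑ k, a k • eM n k + ∑ k, b k • fM n k = 0 := by
    rw [sum_subtype_ne, sum_subtype_ne]
    have hae : ∀ m : {k : ZMod n // k ≠ 0}, a m.1 = g (Sum.inl m) := by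
      intro m; rw [ha]; simp [m.2]
    have hbf : ∀ m : {k : ZMod n // k ≠ 0}, b m.1 = g (Sum.inr m) := by
      intro m; rw [hb]; simp [m.2]
    have ha0 : a 0 = -(∑ m : {k : ZMod n // k ≠ 0}, g (Sum.inl m)) := by rw [ha]; simp
    have hb0 : b 0 = -(∑ m : {k : ZMod n // k ≠ 0}, g (Sum.inr m)) := by rw [hb]; simp
    simp_rw [hae, hbf, ha0, hb0]
    rw [← hg, Fintype.sum_sum_type]
    simp only [B, smul_sub, Finset.sum_sub_distrib, neg_smul, Finset.sum_smul]
    abel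
  have hk := key n ho a b hsum
  -- all values of a are equal, all values of b are equal
  have haconst : ∀ k, a k = a 0 := fun k => by rw [hk k 0, hk 0 0]
  have hbconst : ∀ k, b k = b 0 := fun k => by
    have h1 := hk 0 k
    have h2 := hk 0 0
    linarith
  -- a 0 = -(n-1) * a 0
  have hcard : Fintype.card {k : ZMod n // k ≠ 0} = n - 1 := by
    have := Fintype.card_subtype_compl (fun k : ZMod n => k = 0)
    rw [Fintype.card_subtype_eq (0 : ZMod n), ZMod.card] at this
    exact this
  have ha0 : a 0 = -((n - 1 : ℕ) * a 0) := by
    have hx1 : a 0 = -(∑ m : {k : ZMod n // k ≠ 0}, g (Sum.inl m)) := by rw [ha]; simp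
    have hx2 : ∀ m : {k : ZMod n // k ≠ 0}, g (Sum.inl m) = a 0 := by
      intro m
      rw [← haconst m.1, ha]; simp [m.2]
    have hx3 : ∑ m : {k : ZMod n // k ≠ 0}, g (Sum.inl m) = (n - 1 : ℕ) * a 0 := by
      rw [Finset.sum_congr rfl (fun m _ => hx2 m), Finset.sum_const, Finset.card_univ, hcard,
        nsmul_eq_mul]
    rw [hx3] at hx1; exact hx1
  have ha00 : a 0 = 0 := by
    have hn1 : ((n - 1 : ℕ) : ℝ) = (n : ℝ) - 1 := by
      have : 1 ≤ n := by omega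
      push_cast [this]; ring
    rw [hn1] at ha0
    have hnpos : (3 : ℝ) ≤ (n : ℝ) := by exact_mod_cast hn
    nlinarith [ha0]
  have hb00 : b 0 = 0 := by have := hk 0 0; rw [ha00] at this; linarith
  rintro (m | m)
  · have : a m.1 = g (Sum.inl m) := by rw [ha]; simp [m.2]
    rw [← this, haconst, ha00]
  · have : b m.1 = g (Sum.inr m) := by rw [hb]; simp [m.2]
    rw [← this, hbconst, hb00]

lemma f0_sub_e0_mem (hn : 3 ≤ n) :
    fM n 0 - eM n 0 ∈ Submodule.span ℝ (Set.range (B n)) := by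
  set W := Submodule.span ℝ (Set.range (B n))
  have hsum : (n : ℝ) • (fM n 0 - eM n 0) =
      (∑ k : {k : ZMod n // k ≠ 0}, B n (Sum.inl k)) -
      (∑ k : {k : ZMod n // k ≠ 0}, B n (Sum.inr k)) := by
    have he : ∑ k, eM n k = eM n 0 + ∑ k : {k : ZMod n // k ≠ 0}, eM n k.1 :=
      sum_subtype_ne n _
    have hf : ∑ k, fM n k = fM n 0 + ∑ k : {k : ZMod n // k ≠ 0}, fM n k.1 :=
      sum_subtype_ne n _
    have hef : ∑ k, eM n k = ∑ k, fM n k := by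
      ext i j; rw [sum_eM_apply, sum_fM_apply]
    have hcard : Fintype.card {k : ZMod n // k ≠ 0} = n - 1 := by
      have := Fintype.card_subtype_compl (fun k : ZMod n => k = 0)
      rw [Fintype.card_subtype_eq (0 : ZMod n), ZMod.card] at this
      exact this
    simp only [B, Finset.sum_sub_distrib, Finset.sum_const, Finset.card_univ, hcard]
    have h1 : ∑ k : {k : ZMod n // k ≠ 0}, eM n k.1 = (∑ k, eM n k) - eM n 0 := by
      rw [he]; abel
    have h2 : ∑ k : {k : ZMod n // k ≠ 0}, fM n k.1 = (∑ k, fM n k) - fM n 0 := by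
      rw [hf]; abel
    rw [h1, h2, hef]
    have hn1 : (n - 1 : ℕ) • eM n 0 = (n : ℝ) • eM n 0 - eM n 0 := by
      rw [← Nat.cast_smul_eq_nsmul ℝ]
      have : ((n - 1 : ℕ) : ℝ) = (n : ℝ) - 1 := by
        have : 1 ≤ n := by omega
        push_cast [this]; ring
      rw [this, sub_smul, one_smul]
    have hn2 : (n - 1 : ℕ) • fM n 0 = (n : ℝ) • fM n 0 - fM n 0 := by
      rw [← Nat.cast_smul_eq_nsmul ℝ]
      have : ((n - 1 : ℕ) : ℝ) = (n : ℝ) - 1 := by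
        have : 1 ≤ n := by omega
        push_cast [this]; ring
      rw [this, sub_smul, one_smul]
    rw [hn1, hn2, smul_sub]
    abel
  have hmem : (n : ℝ) • (fM n 0 - eM n 0) ∈ W := by
    rw [hsum]
    exact sub_mem (Submodule.sum_mem _ fun k _ => Submodule.subset_span ⟨Sum.inl k, rfl⟩)
      (Submodule.sum_mem _ fun k _ => Submodule.subset_span ⟨Sum.inr k, rfl⟩)
  have hne : (n : ℝ) ≠ 0 := by positivity
  have := Submodule.smul_mem W (n : ℝ)⁻¹ hmem
  rwa [smul_smul, inv_mul_cancel₀ hne, one_smul] at this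

lemma span_eq (hn : 3 ≤ n) :
    vectorSpan ℝ {M | ∃ σ ∈ dihedral n, M = permMat n σ} =
      Submodule.span ℝ (Set.range (B n)) := by
  rw [vertexSet_eq]
  set S : Set (Matrix (ZMod n) (ZMod n) ℝ) := Set.range (Sum.elim (eM n) (fM n)) with hS
  set W := Submodule.span ℝ (Set.range (B n)) with hW
  have heS : ∀ k, eM n k ∈ S := fun k => ⟨Sum.inl k, rfl⟩
  have hfS : ∀ k, fM n k ∈ S := fun k => ⟨Sum.inr k, rfl⟩
  have hdiff : ∀ x ∈ S, x - eM n 0 ∈ W := by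
    rintro x ⟨(k | k), rfl⟩
    · simp only [Sum.elim_inl]
      by_cases h : k = 0
      · subst h; simp
      · exact Submodule.subset_span ⟨Sum.inl ⟨k, h⟩, rfl⟩
    · simp only [Sum.elim_inr]
      have h1 : fM n k - fM n 0 ∈ W := by
        by_cases h : k = 0
        · subst h; simp
        · exact Submodule.subset_span ⟨Sum.inr ⟨k, h⟩, rfl⟩
      have h2 := f0_sub_e0_mem n hn
      have : fM n k - eM n 0 = (fM n k - fM n 0) + (fM n 0 - eM n 0) := by abel
      rw [this]
      exact add_mem h1 h2
  apply le_antisymm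
  · rw [vectorSpan_def, Submodule.span_le]
    rintro v ⟨x, hx, y, hy, rfl⟩
    have hmem : (x - eM n 0) - (y - eM n 0) ∈ W := sub_mem (hdiff x hx) (hdiff y hy)
    simpa [vsub_eq_sub, sub_sub_sub_cancel_right] using hmem
  · rw [Submodule.span_le]
    rintro v ⟨(k | k), rfl⟩
    · exact vsub_mem_vectorSpan ℝ (heS k.1) (heS 0)
    · exact vsub_mem_vectorSpan ℝ (hfS k.1) (hfS 0)

end DPAux

/-- for odd `n`, `dim DP_n = 2n - 2`. -/
theorem DP_dim_odd (n : ℕ) [NeZero n] (hn : 3 ≤ n) (ho : Odd n) :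
    Module.finrank ℝ (vectorSpan ℝ (DP n)) = 2 * n - 2 := by
  rw [DP, ← direction_affineSpan, affineSpan_convexHull, direction_affineSpan,
    DPAux.span_eq n hn, finrank_span_eq_card (DPAux.linindep_B n hn ho),
    DPAux.card_idx n hn]
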